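/- Let X be a compact Hausdorff space, π : X → Ω a surjective local homeomorphism with finite fibers onto a Hausdorff space Ω, and R the equivalence relation defined by π. If c : R → ℝ is a continuous additive cocycle (c(x,y) + c(y,z) = c(x,z)), then c is a coboundary: there exists a continuous b : X → ℝ with c(x,y) = b(x) − b(y) for all (x,y) ∈ R. -/

import Mathlib

/-- every continuous additive cocycle on the proper equivalence
relation defined by a surjective local homeomorphism with finite fibers on a
compact space is a coboundary. -/
theorem stmt7 {X Ω : Type*} [TopologicalSpace X] [CompactSpace X] [T2Space X]
    [TopologicalSpace Ω] [T2Space Ω]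
    (π : X → Ω) (hsurj : Function.Surjective π) (hloc : IsLocalHomeomorph π)
    (hfin : ∀ ω : Ω, (π ⁻¹' {ω}).Finite)
    (c : X → X → ℝ)
    (hccont : ContinuousOn (fun p : X × X => c p.1 p.2) {p : X × X | π p.1 = π p.2})
    (hcocycle : ∀ x y z, π x = π y → π y = π z → c x y + c y z = c x z) :
    ∃ b : X → ℝ, Continuous b ∧ ∀ x y, π x = π y → c x y = b x - b y := by
  classical
  set F : Ω → Finset X := fun ω => (hfin ω).toFinset with hFdef
  have hmemF : ∀ (ω : Ω) (x : X), x ∈ F ω ↔ π x = ω := by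
    intro ω x; simp [hFdef, Set.Finite.mem_toFinset]
  have hself : ∀ x : X, x ∈ F (π x) := fun x => (hmemF _ _).2 rfl
  set b : X → ℝ := fun x => (∑ z ∈ F (π x), c x z) / (F (π x)).card with hbdef
  refine ⟨b, ?_, ?_⟩
  · -- continuity
    rw [continuous_iff_continuousAt]
    intro x0
    -- local homeomorphism charts
    choose e hes heq using fun y : X => hloc y
    have hπe : ∀ (y : X) (z : X), π z = e y z := fun y z => congrFun (heq y) z
    -- pairwise disjoint neighborhoods of the fiber over π x0
    obtain ⟨W, hW, hWdisj⟩ := (hfin (π x0)).t2_separation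
    set F0 : Finset X := F (π x0) with hF0def
    set V : X → Set X := fun y => (e y).source ∩ W y with hVdef
    have hVopen : ∀ y, IsOpen (V y) := fun y => (e y).open_source.inter (hW y).2
    have hmemV : ∀ y, y ∈ V y := fun y => ⟨hes y, (hW y).1⟩
    have hinjV : ∀ y, Set.InjOn π (V y) := by
      intro y a ha b hb hab
      exact (e y).injOn (ha.1) (hb.1) (by rw [← hπe, ← hπe, hab])
    -- the complement of the union of sheets
    set K : Set X := (⋃ y ∈ F0, V y)ᶜ with hKdef
    have hKclosed : IsClosed K := by
      apply IsOpen.isClosed_compl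
      exact isOpen_biUnion fun y _ => hVopen y
    have hπK : IsClosed (π '' K) :=
      (hKclosed.isCompact.image hloc.continuous).isClosed
    set U : Set Ω := (π '' K)ᶜ ∩ ⋂ y ∈ F0, π '' (V y) with hUdef
    have hUopen : IsOpen U := by
      refine hπK.isOpen_compl.inter (isOpen_biInter_finset fun y _ => ?_)
      exact hloc.isOpenMap _ (hVopen y)
    have hω0U : π x0 ∈ U := by
      constructor
      · intro ⟨k, hkK, hk⟩
        have : k ∈ F0 := by rw [hF0def, hmemF]; exact hk
        exact hkK (Set.mem_biUnion this (hmemV k))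
      · refine Set.mem_iInter₂.2 fun y hy => ⟨y, hmemV y, ?_⟩
        exact (hmemF _ _).1 hy
    -- key facts on U
    have hsec : ∀ ω ∈ U, ∀ y ∈ F0, (e y).symm ω ∈ V y ∧ π ((e y).symm ω) = ω := by
      intro ω hω y hy
      obtain ⟨z, hzV, hzπ⟩ := Set.mem_iInter₂.1 hω.2 y hy
      have hz : (e y).symm ω = z := by
        rw [← hzπ, hπe y z, (e y).left_inv hzV.1]
      rw [hz]; exact ⟨hzV, hzπ⟩
    have hfiber : ∀ ω ∈ U, F ω = F0.image fun y => (e y).symm ω := by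
      intro ω hω
      apply Finset.ext; intro z
      rw [hmemF, Finset.mem_image]
      constructor
      · intro hz
        have hzK : z ∉ K := fun hzK => hω.1 ⟨z, hzK, hz⟩
        obtain ⟨y, hy, hzy⟩ := by
          simpa [hKdef] using hzK
        refine ⟨y, hy, ?_⟩
        have h1 := hsec ω hω y hy
        exact hinjV y h1.1 ⟨hzy.1, hzy.2⟩ (h1.2.trans hz.symm)
      · intro ⟨y, hy, hz⟩
        rw [← hz]; exact (hsec ω hω y hy).2
    have hinj : ∀ ω ∈ U, Set.InjOn (fun y => (e y).symm ω) F0 := by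
      intro ω hω y hy y' hy' h
      by_contra hne
      have h1 := (hsec ω hω y hy).1
      have h2 := (hsec ω hω y' hy').1
      have := hWdisj ((hmemF _ _).1 hy) ((hmemF _ _).1 hy') hne
      have h' : ((e y).symm ω : X) = (e y').symm ω := h
      exact this.le_bot ⟨h1.2, by rw [h']; exact h2.2⟩
    -- local formula for b
    set g : X → ℝ := fun x => (∑ y ∈ F0, c x ((e y).symm (π x))) / F0.card with hgdef
    have hO : IsOpen (π ⁻¹' U) := hUopen.preimage hloc.continuous
    have hx0O : x0 ∈ π ⁻¹' U := hω0U
    have hbg : Set.EqOn b g (π ⁻¹' U) := by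
      intro x hx
      have h1 : F (π x) = F0.image fun y => (e y).symm (π x) := hfiber _ hx
      have h2 : ∑ z ∈ F (π x), c x z = ∑ y ∈ F0, c x ((e y).symm (π x)) := by
        rw [h1, Finset.sum_image (fun a ha b hb hab => hinj _ hx ha hb hab)]
      have h3 : (F (π x)).card = F0.card := by
        rw [h1, Finset.card_image_of_injOn (hinj _ hx)]
      simp only [hbdef, hgdef, h2, h3]
    -- continuity of g on the preimage of U
    have hgc : ContinuousOn g (π ⁻¹' U) := by
      apply ContinuousOn.div_const
      apply continuousOn_finset_sum
      intro y hy
      have hpair : ContinuousOn (fun x => (x, (e y).symm (π x))) (π ⁻¹' U) := by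
        refine continuousOn_id.prodMk ?_
        refine ((e y).continuousOn_symm.comp hloc.continuous.continuousOn ?_)
        intro x hx
        obtain ⟨z, hzV, hzπ⟩ := Set.mem_iInter₂.1 hx.2 y hy
        rw [← hzπ, hπe y z]
        exact (e y).map_source hzV.1
      refine hccont.comp hpair ?_
      intro x hx
      exact ((hsec _ hx y hy).2).symm
    exact ((hgc.congr fun x hx => hbg hx).continuousAt (hO.mem_nhds hx0O))
  · -- cocycle identity
    intro x y hxy
    have hcard : ((F (π x)).card : ℝ) ≠ 0 :=
      Nat.cast_ne_zero.2 (Finset.card_ne_zero_of_mem (hself x))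
    have hsum : ∑ z ∈ F (π x), c x z - ∑ z ∈ F (π x), c y z
        = (F (π x)).card • c x y := by
      rw [← Finset.sum_sub_distrib, Finset.sum_congr rfl, Finset.sum_const]
      intro z hz
      have hz' : π y = π z := hxy.symm.trans ((hmemF _ _).1 hz).symm
      have := hcocycle x y z hxy hz'
      linarith
    show c x y = (∑ z ∈ F (π x), c x z) / (F (π x)).card
        - (∑ z ∈ F (π y), c y z) / (F (π y)).card
    rw [← hxy, div_sub_div_same, hsum, nsmul_eq_mul, mul_div_cancel_left₀ _ hcard]
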